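/- The n^ε-way merge sort recurrences T₁(n, ε) = n^ε·T₁(n^{1-ε}, ε/(1-ε)) + c·n^{1+ε} with base T₁(n, 1) = c·n², and T∞(n, ε) = T∞(n^{1-ε}, ε/(1-ε)) + c'·log n with base T∞(n,1) = c'·log n, where 1/ε is an integer, solve to T₁(n, ε) = O((1/ε)·n^{1+ε}) and T∞(n, ε) = O((ε + 1/ε)·log n). -/

import Mathlib

/-- n^ε-way merge sort: if `T₁(n,1) ≤ c·n²`, `Tinf(n,1) ≤ c'·log n` and for
`ε ∈ (0,1)` the recurrences
`T₁(n,ε) ≤ n^ε·T₁(n^{1-ε}, ε/(1-ε)) + c·n^{1+ε}` and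
`Tinf(n,ε) ≤ Tinf(n^{1-ε}, ε/(1-ε)) + c'·log n` hold, then for every `ε = 1/k`
with `k ≥ 1` a natural number and every `n ≥ 1`,
`T₁(n,ε) ≤ c·(1/ε)·n^{1+ε}` and `Tinf(n,ε) ≤ c'·(ε + 1/ε)·log n`. -/
theorem stmt_18 (c c' : ℝ) (hc : 0 < c) (hc' : 0 < c')
    (T₁ Tinf : ℝ → ℝ → ℝ)
    (hT₁base : ∀ n : ℝ, 1 ≤ n → T₁ n 1 ≤ c * n ^ 2)
    (hTinfbase : ∀ n : ℝ, 1 ≤ n → Tinf n 1 ≤ c' * Real.log n)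
    (hT₁rec : ∀ n ε : ℝ, 1 ≤ n → 0 < ε → ε < 1 →
      T₁ n ε ≤ n ^ ε * T₁ (n ^ (1 - ε)) (ε / (1 - ε)) + c * n ^ (1 + ε))
    (hTinfrec : ∀ n ε : ℝ, 1 ≤ n → 0 < ε → ε < 1 →
      Tinf n ε ≤ Tinf (n ^ (1 - ε)) (ε / (1 - ε)) + c' * Real.log n) :
    ∀ ε : ℝ, (∃ k : ℕ, 1 ≤ k ∧ ε = 1 / (k : ℝ)) → ∀ n : ℝ, 1 ≤ n →
      T₁ n ε ≤ c * (1 / ε) * n ^ (1 + ε) ∧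
      Tinf n ε ≤ c' * (ε + 1 / ε) * Real.log n := by
  have key : ∀ k : ℕ, 1 ≤ k → ∀ n : ℝ, 1 ≤ n →
      T₁ n (1 / (k : ℝ)) ≤ c * (k : ℝ) * n ^ (1 + 1 / (k : ℝ)) ∧
      Tinf n (1 / (k : ℝ)) ≤ c' * (1 / (k : ℝ) + (k : ℝ)) * Real.log n := by
    intro k hk
    induction k, hk using Nat.le_induction with
    | base =>
      intro n hn
      have hlog : 0 ≤ Real.log n := Real.log_nonneg hn
      have hn0 : 0 < n := lt_of_lt_of_le one_pos hn
      have h1 : (1:ℝ)/((1:ℕ):ℝ) = 1 := by norm_num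
      rw [h1]
      constructor
      · have h2 : n ^ ((1:ℝ) + 1) = n ^ 2 := by
          rw [show (1:ℝ)+1 = ((2:ℕ):ℝ) by norm_num, Real.rpow_natCast]
        rw [h2]
        calc T₁ n 1 ≤ c * n ^ 2 := hT₁base n hn
          _ ≤ c * ((1:ℕ):ℝ) * n ^ 2 := by norm_num
      · calc Tinf n 1 ≤ c' * Real.log n := hTinfbase n hn
          _ ≤ c' * (1 + ((1:ℕ):ℝ)) * Real.log n := by
              have h3 := mul_nonneg hc'.le hlog
              push_cast; nlinarith
    | succ k hk ih =>
      intro n hn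
      have hn0 : 0 < n := lt_of_lt_of_le one_pos hn
      have hk0 : (0:ℝ) < (k:ℝ) := by exact_mod_cast hk
      have hK0 : (0:ℝ) < ((k:ℝ) + 1) := by linarith
      have hKcast : ((k + 1 : ℕ) : ℝ) = (k : ℝ) + 1 := by push_cast; ring
      rw [hKcast]
      set ε : ℝ := 1 / ((k:ℝ) + 1) with hε
      have hε0 : 0 < ε := by positivity
      have hε1 : ε < 1 := by
        rw [hε, div_lt_one hK0]; linarith
      have hsub : (1:ℝ) - ε = (k:ℝ) / ((k:ℝ) + 1) := by
        rw [hε]; field_simp; ring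
      have hratio : ε / (1 - ε) = 1 / (k:ℝ) := by
        rw [hsub, hε]; field_simp
      have hm : 1 ≤ n ^ ((1:ℝ) - ε) := by
        apply Real.one_le_rpow hn; linarith
      have hlog : 0 ≤ Real.log n := Real.log_nonneg hn
      have hpos : (0:ℝ) ≤ n ^ ε := (Real.rpow_pos_of_pos hn0 ε).le
      constructor
      · have hrec := hT₁rec n ε hn hε0 hε1
        rw [hratio] at hrec
        have hih := (ih (n ^ ((1:ℝ) - ε)) hm).1
        have hpow : (n ^ ((1:ℝ) - ε)) ^ (1 + 1 / (k:ℝ)) = n := by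
          rw [← Real.rpow_mul (le_of_lt hn0)]
          rw [show (1 - ε) * (1 + 1/(k:ℝ)) = 1 by
            rw [hε]; field_simp; ring]
          exact Real.rpow_one n
        rw [hpow] at hih
        have hmul : n ^ ε * T₁ (n ^ ((1:ℝ) - ε)) (1/(k:ℝ)) ≤ n ^ ε * (c * (k:ℝ) * n) :=
          mul_le_mul_of_nonneg_left hih hpos
        have hid : n ^ ε * (c * (k:ℝ) * n) = c * (k:ℝ) * n ^ (1 + ε) := by
          rw [show (1:ℝ) + ε = ε + 1 by ring, Real.rpow_add hn0, Real.rpow_one]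
          ring
        rw [hid] at hmul
        calc T₁ n ε ≤ n ^ ε * T₁ (n ^ (1 - ε)) (1/(k:ℝ)) + c * n ^ (1 + ε) := hrec
          _ ≤ c * (k:ℝ) * n ^ (1 + ε) + c * n ^ (1 + ε) := by linarith
          _ = c * ((k:ℝ) + 1) * n ^ (1 + ε) := by ring
      · have hrec := hTinfrec n ε hn hε0 hε1
        rw [hratio] at hrec
        have hih := (ih (n ^ ((1:ℝ) - ε)) hm).2
        rw [Real.log_rpow hn0] at hih
        have hcoef : (1/(k:ℝ) + (k:ℝ)) * (1 - ε) + 1 ≤ ε + ((k:ℝ) + 1) := by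
          rw [hε, hsub]
          have e1 : (1/(k:ℝ)+(k:ℝ))*((k:ℝ)/((k:ℝ)+1)) = (1+(k:ℝ)^2)/((k:ℝ)+1) := by
            field_simp
          have e2 : 1/((k:ℝ)+1) + ((k:ℝ)+1) - ((1+(k:ℝ)^2)/((k:ℝ)+1) + 1)
              = (k:ℝ)/((k:ℝ)+1) := by field_simp; ring
          have e3 : (0:ℝ) ≤ (k:ℝ)/((k:ℝ)+1) := div_nonneg hk0.le hK0.le
          linarith
        have hfin : Tinf (n ^ ((1:ℝ) - ε)) (1/(k:ℝ)) + c' * Real.log n ≤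
            c' * (ε + ((k:ℝ) + 1)) * Real.log n := by
          calc Tinf (n ^ ((1:ℝ) - ε)) (1/(k:ℝ)) + c' * Real.log n
              ≤ c' * (1/(k:ℝ) + (k:ℝ)) * ((1 - ε) * Real.log n) + c' * Real.log n := by
                linarith
            _ = c' * ((1/(k:ℝ) + (k:ℝ)) * (1 - ε) + 1) * Real.log n := by ring
            _ ≤ c' * (ε + ((k:ℝ) + 1)) * Real.log n := by
                apply mul_le_mul_of_nonneg_right _ hlog
                exact mul_le_mul_of_nonneg_left hcoef hc'.le
        exact le_trans hrec hfin
  intro ε hε n hn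
  obtain ⟨k, hk, hεk⟩ := hε
  subst hεk
  have h := key k hk n hn
  have hk0 : ((k:ℝ)) ≠ 0 := by positivity <;> exact_mod_cast hk
  rw [one_div_one_div]
  exact h
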